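/- For every partial Boolean function f : Dom(f) → {0,1} with Dom(f) ⊆ {0,1}^n, deterministic sabotage complexity equals deterministic query complexity: DS(f) = D(f), where DS(f) := D(f_sab). -/

import Mathlib

/-! ### Decision trees -/

/-- A deterministic decision tree querying positions of type `ι`, receiving answers
in `α`, and producing an output in `β`. -/
inductive DTree (ι α β : Type) : Type
  | leaf (b : β) : DTree ι α β
  | node (i : ι) (next : α → DTree ι α β) : DTree ι α β

namespace DTree

variable {ι α β : Type}

/-- The output of a decision tree on input `x`. -/
def output : DTree ι α β → (ι → α) → β
  | leaf b, _ => b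
  | node i next, x => (next (x i)).output x

/-- The number of queries made by a decision tree on input `x`. -/
def cost : DTree ι α β → (ι → α) → ℕ
  | leaf _, _ => 0
  | node i next, x => (next (x i)).cost x + 1

/-- The set of positions queried by a decision tree on input `x`. -/
def queries : DTree ι α β → (ι → α) → Set ι
  | leaf _, _ => ∅
  | node i next, x => insert i ((next (x i)).queries x)

end DTree

/-- A partial function on inputs `ι → α` with outputs in `β`; `none` means undefined
(the domain is the set of inputs mapped to `some` value). -/
abbrev PFn (ι α β : Type) := (ι → α) → Option β

/-- `t` computes the partial function `f` (correct on every input of the domain). -/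
def DTree.computesP {ι α β : Type} (t : DTree ι α β) (f : PFn ι α β) : Prop :=
  ∀ x b, f x = some b → t.output x = b

/-- Deterministic query complexity `D(f)`. -/
noncomputable def Dq {ι α β : Type} (f : PFn ι α β) : ℝ :=
  sInf {T : ℝ | 0 ≤ T ∧ ∃ t : DTree ι α β, t.computesP f ∧ ∀ x, (t.cost x : ℝ) ≤ T}

/-! ### Randomized query algorithms -/

/-- A randomized query algorithm: a finitely supported probability distribution over
deterministic decision trees. -/
structure RandAlg (ι α β : Type) where
  Ω : Type
  [fin : Fintype Ω]
  p : Ω → ℝ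
  nonneg : ∀ ω, 0 ≤ p ω
  sum_one : ∑ ω, p ω = 1
  tree : Ω → DTree ι α β

namespace RandAlg

variable {ι α β : Type}

/-- Expected number of queries of `A` on input `x`. -/
noncomputable def expCost (A : RandAlg ι α β) (x : ι → α) : ℝ :=
  letI := A.fin
  ∑ ω, A.p ω * ((A.tree ω).cost x : ℝ)

open Classical in
/-- Probability that `A` outputs `b` on input `x`. -/
noncomputable def succProb (A : RandAlg ι α β) (x : ι → α) (b : β) : ℝ :=
  letI := A.fin
  ∑ ω, if (A.tree ω).output x = b then A.p ω else 0

/-- `A` computes `f` with error at most `ε`: on every input of the domain the correct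
output is produced with probability at least `1 - ε`. -/
def Computes (A : RandAlg ι α β) (f : PFn ι α β) (ε : ℝ) : Prop :=
  ∀ x b, f x = some b → 1 - ε ≤ A.succProb x b

/-- The worst-case cost of `A` (over all inputs and all trees in the support) is at most `T`. -/
def WCostLe (A : RandAlg ι α β) (T : ℝ) : Prop :=
  ∀ ω, A.p ω ≠ 0 → ∀ x, ((A.tree ω).cost x : ℝ) ≤ T

/-- The expected cost of `A` on every input of the domain of `f` is at most `T`. -/
def ECostLe (A : RandAlg ι α β) (f : PFn ι α β) (T : ℝ) : Prop :=
  ∀ x, (f x).isSome → A.expCost x ≤ T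

end RandAlg

/-- `R_ε(f)`: minimum worst-case cost of an `ε`-error randomized algorithm for `f`. -/
noncomputable def Rw {ι α β : Type} (ε : ℝ) (f : PFn ι α β) : ℝ :=
  sInf {T : ℝ | 0 ≤ T ∧ ∃ A : RandAlg ι α β, A.Computes f ε ∧ A.WCostLe T}

/-- `R̄_ε(f)`: minimum expected cost of an `ε`-error randomized algorithm for `f`. -/
noncomputable def Rbar {ι α β : Type} (ε : ℝ) (f : PFn ι α β) : ℝ :=
  sInf {T : ℝ | 0 ≤ T ∧ ∃ A : RandAlg ι α β, A.Computes f ε ∧ A.ECostLe f T}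

/-- `R₀(f)`: zero-error expected randomized query complexity. -/
noncomputable def R0 {ι α β : Type} (f : PFn ι α β) : ℝ := Rbar 0 f

/-- `R(f) := R_{1/3}(f)`: bounded-error randomized query complexity. -/
noncomputable def Rb {ι α β : Type} (f : PFn ι α β) : ℝ := Rw (1/3) f

/-- The total function `f` viewed as a partial function. -/
def tot {ι α β : Type} (f : (ι → α) → β) : PFn ι α β := fun x => some (f x)


/-! ### Sabotage complexity and composition -/

/-- The four-letter alphabet `{0, 1, *, †}` of sabotaged inputs. -/
inductive Sab : Type
  | zero : Sab
  | one : Sab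
  | star : Sab
  | dagger : Sab
deriving DecidableEq

/-- Embedding of Boolean values into the sabotage alphabet. -/
def Sab.ofBool : Bool → Sab
  | false => Sab.zero
  | true => Sab.one

/-- `p` is consistent with the Boolean input `x`: wherever `p` has a Boolean entry,
it agrees with `x`. -/
def SabConsistent {ι : Type} (p : ι → Sab) (x : ι → Bool) : Prop :=
  ∀ i, p i = Sab.ofBool (x i) ∨ p i = Sab.star ∨ p i = Sab.dagger

/-- `p` is a sabotaged input for `f` using the sabotage symbol `s`: all entries of `p`
lie in `{0, 1, s}` and `p` is consistent with both a `0`-input and a `1`-input of `f`. -/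
def IsSabotaged {ι : Type} (f : PFn ι Bool Bool) (s : Sab) (p : ι → Sab) : Prop :=
  (∀ i, p i = Sab.zero ∨ p i = Sab.one ∨ p i = s) ∧
  ∃ x y, (f x).isSome ∧ (f y).isSome ∧ f x ≠ f y ∧ SabConsistent p x ∧ SabConsistent p y

open Classical in
/-- The sabotage problem `f_sab` associated with `f`: it is `0` on `P_f` (inputs
sabotaged with `*`) and `1` on `P_f†` (inputs sabotaged with `†`). -/
noncomputable def fsab {ι : Type} (f : PFn ι Bool Bool) : PFn ι Sab Bool :=
  fun p =>
    if IsSabotaged f Sab.star p then some false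
    else if IsSabotaged f Sab.dagger p then some true
    else none

open Classical in
/-- `f_usab`: the restriction of `f_sab` to inputs having exactly one `*` or `†` entry. -/
noncomputable def fusab {ι : Type} (f : PFn ι Bool Bool) : PFn ι Sab Bool :=
  fun p =>
    if ∃! i, p i = Sab.star ∨ p i = Sab.dagger then fsab f p else none

/-- Randomized sabotage complexity `RS(f) := R₀(f_sab)`. -/
noncomputable def RS {ι : Type} (f : PFn ι Bool Bool) : ℝ := R0 (fsab f)

/-- `RS_u(f) := R₀(f_usab)` (this is `0` automatically when `f_usab` has empty domain). -/
noncomputable def RSu {ι : Type} (f : PFn ι Bool Bool) : ℝ := R0 (fusab f)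

open Classical in
/-- Composition `f ∘ g` of partial functions: defined on an input exactly when every
inner copy of `g` is defined and the tuple of inner values lies in the domain of `f`. -/
noncomputable def pcomp {κ ι α β γ : Type} (f : PFn κ β γ) (g : PFn ι α β) :
    PFn (κ × ι) α γ :=
  fun x =>
    if h : ∀ i : κ, (g fun j => x (i, j)).isSome then
      f fun i => (g fun j => x (i, j)).get (h i)
    else none

/-- Index types for iterated self-composition. -/
def IterIdx (κ : Type) : ℕ → Type
  | 0 => κ
  | n + 1 => κ × IterIdx κ n

/-- `iterComp f n` is `f` composed with itself `n + 1` times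
(`iterComp f 0 = f`, `iterComp f (n+1) = f ∘ iterComp f n`). -/
noncomputable def iterComp {κ : Type} (f : PFn κ Bool Bool) : (n : ℕ) → PFn (IterIdx κ n) Bool Bool
  | 0 => f
  | n + 1 => pcomp f (iterComp f n)

/-! ### The index function -/

/-- The value of a bit-string read as a binary number (bit `i` has weight `2^i`). -/
def binval {b : ℕ} (x : Fin b → Bool) : ℕ := ∑ i, if x i then 2 ^ (i : ℕ) else 0

theorem sum_range_two_pow (b : ℕ) : ∑ i ∈ Finset.range b, 2 ^ i = 2 ^ b - 1 := by
  induction b with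
  | zero => simp
  | succ n ih =>
    rw [Finset.sum_range_succ, ih, pow_succ]
    have : 1 ≤ 2 ^ n := Nat.one_le_two_pow
    omega

theorem binval_lt {b : ℕ} (x : Fin b → Bool) : binval x < 2 ^ b := by
  have h1 : binval x ≤ ∑ i : Fin b, 2 ^ (i : ℕ) := by
    refine Finset.sum_le_sum fun i _ => ?_
    split <;> simp
  have h2 : ∑ i : Fin b, 2 ^ (i : ℕ) = 2 ^ b - 1 := by
    rw [Fin.sum_univ_eq_sum_range (fun i => 2 ^ i) b]
    exact sum_range_two_pow b
  have h3 : 0 < 2 ^ b := Nat.pow_pos (by norm_num)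
  omega

/-- The largest `c` with `c + 2^c ≤ m`. -/
def indexC (m : ℕ) : ℕ := Nat.findGreatest (fun c => c + 2 ^ c ≤ m) m

/-- The index function `Ind_m : {0,1}^m → {0,1}`: the first `c` bits (where `c` is the
largest integer with `c + 2^c ≤ m`) are read as a binary address `y` into the next
`2^c` bits, and the output is the addressed bit. -/
def IndFn (m : ℕ) : PFn (Fin m) Bool Bool :=
  fun x =>
    let c := indexC m
    let y := ∑ i : Fin m, if (i : ℕ) < c ∧ x i = true then 2 ^ (i : ℕ) else 0
    if h : c + y < m then some (x ⟨c + y, h⟩) else none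

/-- `f^{⊕c}_ind`: the index function on `c + 2^c` bits with `f` composed into each of
the `c` address bits only. -/
def findex {n : ℕ} (f : PFn (Fin n) Bool Bool) (c : ℕ) :
    PFn ((Fin c × Fin n) ⊕ Fin (2 ^ c)) Bool Bool :=
  fun x =>
    if h : ∀ i : Fin c, (f fun j => x (Sum.inl (i, j))).isSome then
      some (x (Sum.inr ⟨binval fun i => (f fun j => x (Sum.inl (i, j))).get (h i),
        binval_lt _⟩))
    else none


/-! ### Auxiliary material for `DS_eq_D` -/

namespace DSeqD

open Classical

variable {ι : Type}

/-- Embed a Boolean string into the sabotage alphabet. -/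
def emb (x : ι → Bool) : ι → Sab := fun i => Sab.ofBool (x i)

/-- Map a sabotage symbol back to a Boolean (`*`, `†` arbitrarily to `false`). -/
def toB : Sab → Bool
  | Sab.one => true
  | _ => false

/-- Transform a tree for `f` into a tree for `fsab f`. -/
def transform : DTree ι Bool Bool → DTree ι Sab Bool
  | .leaf b => .leaf b
  | .node i next => .node i fun a =>
      match a with
      | Sab.zero => transform (next false)
      | Sab.one => transform (next true)
      | Sab.star => .leaf false
      | Sab.dagger => .leaf true

/-- The output of `transform` at the sabotage symbol `s`. -/
def sval : Sab → Bool
  | Sab.dagger => true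
  | _ => false

theorem transform_cost (t : DTree ι Bool Bool) (p : ι → Sab) :
    (transform t).cost p ≤ t.cost (fun i => toB (p i)) := by
  induction t with
  | leaf b => simp [transform, DTree.cost]
  | node i next ih =>
    simp only [transform, DTree.cost]
    cases h : p i
    · simpa [h, DTree.cost, toB] using Nat.succ_le_succ (ih false)
    · simpa [h, DTree.cost, toB] using Nat.succ_le_succ (ih true)
    · simp [h, DTree.cost, toB]
    · simp [h, DTree.cost, toB]

theorem transform_output (t : DTree ι Bool Bool) (p : ι → Sab) (s : Sab)
    (hs : s = Sab.star ∨ s = Sab.dagger)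
    (hp : ∀ i, p i = Sab.zero ∨ p i = Sab.one ∨ p i = s)
    (hxy : ∃ x y : ι → Bool, SabConsistent p x ∧ SabConsistent p y ∧
      t.output x ≠ t.output y) :
    (transform t).output p = sval s := by
  induction t with
  | leaf b =>
    obtain ⟨x, y, _, _, hne⟩ := hxy
    exact absurd rfl hne
  | node i next ih =>
    obtain ⟨x, y, hcx, hcy, hne⟩ := hxy
    cases hpi : p i with
    | zero =>
      have hx : x i = false := by
        rcases hcx i with h | h | h <;> rw [hpi] at h
        · cases hxi : x i <;> simp [Sab.ofBool, hxi] at h ⊢ <;> tauto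
        · exact absurd h (by simp)
        · exact absurd h (by simp)
      have hy : y i = false := by
        rcases hcy i with h | h | h <;> rw [hpi] at h
        · cases hyi : y i <;> simp [Sab.ofBool, hyi] at h ⊢ <;> tauto
        · exact absurd h (by simp)
        · exact absurd h (by simp)
      have : (transform (DTree.node i next)).output p
          = (transform (next false)).output p := by
        simp [transform, DTree.output, hpi]
      rw [this]
      exact ih false ⟨x, y, hcx, hcy, by
        simpa [DTree.output, hx, hy] using hne⟩
    | one =>
      have hx : x i = true := by
        rcases hcx i with h | h | h <;> rw [hpi] at h
        · cases hxi : x i <;> simp [Sab.ofBool, hxi] at h ⊢ <;> tauto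
        · exact absurd h (by simp)
        · exact absurd h (by simp)
      have hy : y i = true := by
        rcases hcy i with h | h | h <;> rw [hpi] at h
        · cases hyi : y i <;> simp [Sab.ofBool, hyi] at h ⊢ <;> tauto
        · exact absurd h (by simp)
        · exact absurd h (by simp)
      have : (transform (DTree.node i next)).output p
          = (transform (next true)).output p := by
        simp [transform, DTree.output, hpi]
      rw [this]
      exact ih true ⟨x, y, hcx, hcy, by
        simpa [DTree.output, hx, hy] using hne⟩
    | star =>
      have : s = Sab.star := by rcases hp i with h | h | h <;> rw [hpi] at h <;> simp_all
      simp [transform, DTree.output, hpi, this, sval]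
    | dagger =>
      have : s = Sab.dagger := by rcases hp i with h | h | h <;> rw [hpi] at h <;> simp_all
      simp [transform, DTree.output, hpi, this, sval]

/-- Trees only depend on (and query the same positions for) inputs agreeing on the
queried set. -/
theorem output_queries_congr {α β : Type} (t : DTree ι α β) (x y : ι → α)
    (h : ∀ i ∈ t.queries x, x i = y i) :
    t.output x = t.output y ∧ t.queries x = t.queries y := by
  induction t with
  | leaf b => exact ⟨rfl, rfl⟩
  | node i next ih =>
    have hi : x i = y i := h i (by simp [DTree.queries])
    have hsub : ∀ j ∈ (next (x i)).queries x, x j = y j := fun j hj =>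
      h j (by simp [DTree.queries]; tauto)
    obtain ⟨ho, hq⟩ := ih (x i) hsub
    constructor
    · simp only [DTree.output, ← hi]; exact ho
    · simp only [DTree.queries, ← hi, hq]

/-- Compatibility of a Boolean input with a partial record of answers. -/
def Compat (ρ : ι → Option Bool) (x : ι → Bool) : Prop :=
  ∀ i v, ρ i = some v → x i = v

open Classical in
/-- Transform a tree for `fsab f` into a tree for `f`, carrying the partial
assignment of answers received so far. -/
noncomputable def transform2 (f : PFn ι Bool Bool) :
    DTree ι Sab Bool → (ι → Option Bool) → DTree ι Bool Bool
  | .leaf _, ρ => .leaf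
      (if h : ∃ q : (ι → Bool) × Bool, f q.1 = some q.2 ∧ Compat ρ q.1
        then h.choose.2 else false)
  | .node i next, ρ => .node i fun a =>
      transform2 f (next (Sab.ofBool a)) (fun j => if j = i then some a else ρ j)

theorem transform2_cost (f : PFn ι Bool Bool) (t : DTree ι Sab Bool)
    (ρ : ι → Option Bool) (x : ι → Bool) :
    (transform2 f t ρ).cost x = t.cost (emb x) := by
  induction t generalizing ρ with
  | leaf b => simp [transform2, DTree.cost]
  | node i next ih => simp [transform2, DTree.cost, emb, ih]

/-- The invariant: any two domain inputs compatible with `ρ` and agreeing on the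
queried set of `t` have the same `f`-value. -/
def Hyp (f : PFn ι Bool Bool) (t : DTree ι Sab Bool) (ρ : ι → Option Bool) : Prop :=
  ∀ x y bx by', f x = some bx → f y = some by' → Compat ρ x → Compat ρ y →
    (∀ i ∈ t.queries (emb x), x i = y i) → bx = by'

theorem transform2_output (f : PFn ι Bool Bool) (t : DTree ι Sab Bool)
    (ρ : ι → Option Bool) (hH : Hyp f t ρ) (x : ι → Bool) (b : Bool)
    (hx : f x = some b) (hc : Compat ρ x) :
    (transform2 f t ρ).output x = b := by
  induction t generalizing ρ with
  | leaf b0 =>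
    have hex : ∃ q : (ι → Bool) × Bool, f q.1 = some q.2 ∧ Compat ρ q.1 :=
      ⟨(x, b), hx, hc⟩
    simp only [transform2, DTree.output, dif_pos hex]
    exact hH hex.choose.1 x hex.choose.2 b hex.choose_spec.1 hx hex.choose_spec.2 hc
      (fun i hi => absurd hi (by simp [DTree.queries]))
  | node i next ih =>
    simp only [transform2, DTree.output]
    refine ih (Sab.ofBool (x i)) (fun j => if j = i then some (x i) else ρ j) ?_ ?_
    · intro x' y' bx by' hx' hy' hcx' hcy' hagree
      have hxi' : x' i = x i := by simpa using hcx' i (x i)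
      have hyi' : y' i = x i := by simpa using hcy' i (x i)
      have hcompat : ∀ z : ι → Bool, Compat (fun j => if j = i then some (x i) else ρ j) z →
          z i = x i → Compat ρ z := by
        intro z hcz hzi j v hj
        by_cases hji : j = i
        · subst hji; rw [hzi]; exact hc j v hj
        · exact hcz j v (by simpa [hji] using hj)
      refine hH x' y' bx by' hx' hy' (hcompat x' hcx' hxi') (hcompat y' hcy' hyi') ?_
      intro j hj
      simp only [DTree.queries, Set.mem_insert_iff] at hj
      rcases hj with rfl | hj
      · rw [hxi', hyi']
      · exact hagree j (by simpa [emb, Sab.ofBool, hxi'] using hj)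
    · intro j v hj
      by_cases hji : j = i
      · subst hji; simp only [if_pos rfl] at hj; exact Option.some.inj hj
      · exact hc j v (by simpa [hji] using hj)

/-- Key claim: a tree computing `fsab f` separates domain inputs with different
values. -/
theorem key (f : PFn ι Bool Bool) (t : DTree ι Sab Bool)
    (ht : t.computesP (fsab f)) : Hyp f t (fun _ => none) := by
  intro x y bx by' hx hy _ _ hagree
  by_contra hne
  set Q := t.queries (emb x) with hQ
  by_cases hall : ∀ i, i ∈ Q
  · have : x = y := funext fun i => hagree i (hall i)
    rw [this, hy] at hx
    exact hne (Option.some.inj hx).symm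
  · push_neg at hall
    obtain ⟨i0, hi0⟩ := hall
    classical
    set p : ι → Sab := fun i => if i ∈ Q then Sab.ofBool (x i) else Sab.star with hp
    set p' : ι → Sab := fun i => if i ∈ Q then Sab.ofBool (x i) else Sab.dagger with hp'
    have hfxy : f x ≠ f y := by rw [hx, hy]; simpa using hne
    have hconsx : ∀ (s : Sab), (s = Sab.star ∨ s = Sab.dagger) → ∀ (pp : ι → Sab),
        (pp = fun i => if i ∈ Q then Sab.ofBool (x i) else s) → SabConsistent pp x := by
      rintro s hs pp rfl i
      by_cases hiQ : i ∈ Q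
      · simp [hiQ]
      · rcases hs with rfl | rfl <;> simp [hiQ]
    have hconsy : ∀ (s : Sab), (s = Sab.star ∨ s = Sab.dagger) → ∀ (pp : ι → Sab),
        (pp = fun i => if i ∈ Q then Sab.ofBool (x i) else s) → SabConsistent pp y := by
      rintro s hs pp rfl i
      by_cases hiQ : i ∈ Q
      · simp [hiQ, hagree i hiQ]
      · rcases hs with rfl | rfl <;> simp [hiQ]
    have halpha : ∀ i, p i = Sab.zero ∨ p i = Sab.one ∨ p i = Sab.star := by
      intro i
      by_cases hiQ : i ∈ Q
      · simp only [hp, if_pos hiQ]; cases x i <;> simp [Sab.ofBool]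
      · simp [hp, hiQ]
    have halpha' : ∀ i, p' i = Sab.zero ∨ p' i = Sab.one ∨ p' i = Sab.dagger := by
      intro i
      by_cases hiQ : i ∈ Q
      · simp only [hp', if_pos hiQ]; cases x i <;> simp [Sab.ofBool]
      · simp [hp', hiQ]
    have hsabp : IsSabotaged f Sab.star p :=
      ⟨halpha, x, y, by simp [hx], by simp [hy], hfxy,
        hconsx Sab.star (Or.inl rfl) p hp, hconsy Sab.star (Or.inl rfl) p hp⟩
    have hsabp' : IsSabotaged f Sab.dagger p' :=
      ⟨halpha', x, y, by simp [hx], by simp [hy], hfxy,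
        hconsx Sab.dagger (Or.inr rfl) p' hp', hconsy Sab.dagger (Or.inr rfl) p' hp'⟩
    have hnostar : ¬ IsSabotaged f Sab.star p' := by
      intro h
      have := h.1 i0
      simp [hp', hi0] at this
    have hv1 : fsab f p = some false := by simp [fsab, hsabp]
    have hv2 : fsab f p' = some true := by simp [fsab, hnostar, hsabp']
    have ho1 : t.output p = false := ht p false hv1
    have ho2 : t.output p' = true := ht p' true hv2
    have he1 : t.output (emb x) = t.output p :=
      (output_queries_congr t (emb x) p (fun i hi => by simp [hp, emb, hQ ▸ hi])).1
    have he2 : t.output (emb x) = t.output p' :=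
      (output_queries_congr t (emb x) p' (fun i hi => by simp [hp', emb, hQ ▸ hi])).1
    rw [ho1] at he1; rw [ho2] at he2
    rw [he1] at he2
    exact Bool.false_ne_true he2

end DSeqD


/-- **Deterministic sabotage complexity equals deterministic query complexity:**
`DS(f) = D(f)` for every partial Boolean function `f`, where `DS(f) := D(f_sab)`. -/
theorem DS_eq_D {n : ℕ} (f : PFn (Fin n) Bool Bool) :
    Dq (fsab f) = Dq f := by
  unfold Dq
  congr 1
  ext T
  constructor
  · rintro ⟨hT, t, hcomp, hcost⟩
    refine ⟨hT, DSeqD.transform2 f t (fun _ => none), ?_, ?_⟩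
    · intro x b hb
      exact DSeqD.transform2_output f t _ (DSeqD.key f t hcomp) x b hb
        (fun i v h => by simp at h)
    · intro x
      rw [DSeqD.transform2_cost]
      exact hcost _
  · rintro ⟨hT, t, hcomp, hcost⟩
    refine ⟨hT, DSeqD.transform t, ?_, ?_⟩
    · intro p b hb
      unfold fsab at hb
      by_cases h1 : IsSabotaged f Sab.star p
      · rw [if_pos h1] at hb
        have hb' : b = false := (Option.some.inj hb).symm
        subst hb'
        obtain ⟨hp, x, y, hxs, hys, hne, hcx, hcy⟩ := h1
        obtain ⟨bx, hbx⟩ := Option.isSome_iff_exists.mp hxs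
        obtain ⟨by', hby⟩ := Option.isSome_iff_exists.mp hys
        have hod : t.output x ≠ t.output y := by
          rw [hcomp x bx hbx, hcomp y by' hby]
          intro h; exact hne (by rw [hbx, hby, h])
        exact DSeqD.transform_output t p Sab.star (Or.inl rfl) hp ⟨x, y, hcx, hcy, hod⟩
      · rw [if_neg h1] at hb
        by_cases h2 : IsSabotaged f Sab.dagger p
        · rw [if_pos h2] at hb
          have hb' : b = true := (Option.some.inj hb).symm
          subst hb'
          obtain ⟨hp, x, y, hxs, hys, hne, hcx, hcy⟩ := h2
          obtain ⟨bx, hbx⟩ := Option.isSome_iff_exists.mp hxs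
          obtain ⟨by', hby⟩ := Option.isSome_iff_exists.mp hys
          have hod : t.output x ≠ t.output y := by
            rw [hcomp x bx hbx, hcomp y by' hby]
            intro h; exact hne (by rw [hbx, hby, h])
          exact DSeqD.transform_output t p Sab.dagger (Or.inr rfl) hp ⟨x, y, hcx, hcy, hod⟩
        · rw [if_neg h2] at hb
          exact absurd hb (by simp)
    · intro p
      exact le_trans (Nat.cast_le.mpr (DSeqD.transform_cost t p)) (hcost _)
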